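/- The ℂ-algebra R = MvPolynomial (Fin 4) ℂ modulo the ideal generated by X·W − Y·Z (where X, Y, Z, W denote the four polynomial variables) is not formally smooth over ℂ; equivalently (since R is finitely presented over ℂ), R is not a smooth ℂ-algebra. -/

import Mathlib

open MvPolynomial

set_option maxHeartbeats 1000000 in
set_option synthInstance.maxHeartbeats 400000 in

theorem stmt_7 :
    ¬ Algebra.FormallySmooth ℂ (MvPolynomial (Fin 4) ℂ ⧸
        Ideal.span {(X 0 * X 3 - X 1 * X 2 : MvPolynomial (Fin 4) ℂ)}) ∧
    ¬ Algebra.Smooth ℂ (MvPolynomial (Fin 4) ℂ ⧸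
        Ideal.span {(X 0 * X 3 - X 1 * X 2 : MvPolynomial (Fin 4) ℂ)}) := by
  set P := MvPolynomial (Fin 4) ℂ
  set f : P := X 0 * X 3 - X 1 * X 2 with hf
  set I : Ideal P := Ideal.span {f} with hI
  have key : ¬ Algebra.FormallySmooth ℂ (P ⧸ I) := by
    intro hs
    set π : P →ₐ[ℂ] P ⧸ I := Ideal.Quotient.mkₐ ℂ I with hπ
    have hsurj : Function.Surjective π := Ideal.Quotient.mkₐ_surjective ℂ I
    obtain ⟨g, hg⟩ := (Algebra.FormallySmooth.iff_split_surjection π hsurj).mp hs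
    have hker : RingHom.ker π.toRingHom = I := Ideal.mk_ker
    -- choose lifts p i of g (π (X i))
    have hex : ∀ i : Fin 4, ∃ p : P,
        Ideal.Quotient.mk (RingHom.ker π.toRingHom ^ 2) p = g (π (X i)) :=
      fun i => Ideal.Quotient.mk_surjective _
    choose p hp using hex
    -- each p i - X i ∈ I
    have hpi : ∀ i : Fin 4, f ∣ (p i - X i) := by
      intro i
      have : π (p i) = π (X i) := by
        have := congrArg (fun h => h (π (X i))) hg
        simp only [AlgHom.comp_apply, AlgHom.id_apply] at this
        rw [← hp i] at this
        exact this
      rw [← Ideal.mem_span_singleton, ← hI]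
      have := Ideal.Quotient.eq.mp (by simpa [hπ] using this)
      exact this
    choose q hq using fun i => (hpi i)
    have hq' : ∀ i, p i = X i + q i * f := by
      intro i; have := hq i; linear_combination this
    -- g (π f) = 0
    have h0 : Ideal.Quotient.mk (RingHom.ker π.toRingHom ^ 2) (p 0 * p 3 - p 1 * p 2) = 0 := by
      have hπf : π f = 0 := by
        simp [hπ, Ideal.Quotient.eq_zero_iff_mem, hI, Ideal.mem_span_singleton]
      calc Ideal.Quotient.mk (RingHom.ker π.toRingHom ^ 2) (p 0 * p 3 - p 1 * p 2)
          = g (π (X 0)) * g (π (X 3)) - g (π (X 1)) * g (π (X 2)) := by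
            rw [map_sub, map_mul, map_mul, hp 0, hp 3, hp 1, hp 2]
        _ = g (π f) := by rw [hf, map_sub π, map_mul π, map_mul π, map_sub g, map_mul g, map_mul g]
        _ = 0 := by rw [hπf, map_zero]
    have hmem : p 0 * p 3 - p 1 * p 2 ∈ RingHom.ker π.toRingHom ^ 2 :=
      Ideal.Quotient.eq_zero_iff_mem.mp h0
    rw [hker, hI, Ideal.span_singleton_pow, Ideal.mem_span_singleton] at hmem
    -- hmem : f ^ 2 ∣ p0 p3 - p1 p2
    set u : P := 1 + X 0 * q 3 + X 3 * q 0 - X 1 * q 2 - X 2 * q 1 + f * (q 0 * q 3 - q 1 * q 2)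
      with hu
    have heq : p 0 * p 3 - p 1 * p 2 = f * u := by
      rw [hq' 0, hq' 1, hq' 2, hq' 3, hu, hf]; ring
    have hfu : f * f ∣ f * u := by rw [← heq]; simpa [pow_two] using hmem
    have hfne : f ≠ 0 := by
      intro h
      have := congrArg (eval ![1,0,0,1]) h
      simp [hf] at this
    have hfu' : f ∣ u := (mul_dvd_mul_iff_left hfne).mp hfu
    obtain ⟨v, hv⟩ := hfu'
    have := congrArg constantCoeff hv
    simp [hu, hf, map_add, map_sub, map_mul, map_one] at this
  exact ⟨key, fun h => key h.1⟩
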